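/- Weight of a monomial times a linear form: let I, J ⊆ [n] be disjoint subsets with J nonempty and |I| = n₁. Then the Boolean function f : 𝔽₂ⁿ → 𝔽₂ defined by f(a) = (∏_{i ∈ I} a_i) · (∑_{j ∈ J} a_j) has Hamming weight w_H(f) = 2^{n − n₁ − 1}. Moreover, in the quotient ring R_n = 𝔽₂[X_1, …, X_n]/⟨X_1², …, X_n²⟩, the image of X^I (∑_{j ∈ J} X_j) · ∏_{i=1}^{n}(1 + X_i) equals the image of X^I · ∏_{k ∈ [n] ∖ (I ∪ J)}(1 + X_k) · (∑_{K ⊆ J, |K| odd} ∏_{k ∈ K} X_k). -/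

import Mathlib

/-- The Hamming weight of a Boolean function. -/
def hammingWeight {n : ℕ} (f : (Fin n → ZMod 2) → ZMod 2) : ℕ :=
  (Finset.univ.filter fun a : Fin n → ZMod 2 => f a = 1).card

/-- The ideal `⟨X_1², …, X_n²⟩`. -/
noncomputable def sqIdeal (n : ℕ) : Ideal (MvPolynomial (Fin n) (ZMod 2)) :=
  Ideal.span (Set.range fun i : Fin n => (MvPolynomial.X i) ^ 2)

lemma aux_prod_one_add {R : Type*} [CommRing R] {ι : Type*} [DecidableEq ι]
    (x : ι → R) (s : Finset ι) :
    ∏ i ∈ s, (1 + x i) = ∑ t ∈ s.powerset, ∏ k ∈ t, x k := by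
  rw [Finset.prod_add]
  refine Finset.sum_nbij' (fun t => s \ t) (fun t => s \ t) ?_ ?_ ?_ ?_ ?_
  · intro t ht; simp [Finset.mem_powerset]
  · intro t ht; simp [Finset.mem_powerset]
  · intro t ht; simp at ht; exact Finset.sdiff_sdiff_eq_self ht
  · intro t ht; simp at ht; exact Finset.sdiff_sdiff_eq_self ht
  · intro t ht; simp

lemma aux_key {R : Type*} [CommRing R] (hc : (2 : R) = 0) {ι : Type*} [DecidableEq ι]
    (x : ι → R) (J : Finset ι) (hx : ∀ j ∈ J, x j * x j = 0) :
    (∑ j ∈ J, x j) * ∏ j ∈ J, (1 + x j) =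
      ∑ K ∈ J.powerset.filter (fun K => Odd K.card), ∏ k ∈ K, x k := by
  induction J using Finset.induction_on with
  | empty => simp [Finset.sum_filter]
  | insert _ _ ha ih =>
    rename_i a s
    have ih' := ih (fun j hj => hx j (Finset.mem_insert_of_mem hj))
    have hxa : x a * x a = 0 := hx a (Finset.mem_insert_self a s)
    have hodd : ∀ (s' : Finset ι),
        ∑ K ∈ s'.powerset.filter (fun K => Odd K.card), ∏ k ∈ K, x k
          = ∑ K ∈ s'.powerset, if Odd K.card then ∏ k ∈ K, x k else 0 :=
      fun s' => (Finset.sum_filter _ _)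
    have hE : ∑ t ∈ s.powerset, (if Odd (insert a t).card then ∏ k ∈ insert a t, x k else 0)
        = x a * ∑ t ∈ s.powerset, (if Even t.card then ∏ k ∈ t, x k else 0) := by
      rw [Finset.mul_sum]
      refine Finset.sum_congr rfl fun t ht => ?_
      have hat : a ∉ t := fun h => ha (Finset.mem_powerset.mp ht h)
      rw [Finset.card_insert_of_notMem hat, Finset.prod_insert hat]
      rcases Nat.even_or_odd t.card with h | h
      · rw [if_pos (Even.add_one h), if_pos h]
      · rw [if_neg (Nat.not_odd_iff_even.mpr (Odd.add_one h)),
          if_neg (Nat.not_even_iff_odd.mpr h), mul_zero]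
    have hsplit : ∏ j ∈ s, (1 + x j)
        = (∑ t ∈ s.powerset, (if Odd t.card then ∏ k ∈ t, x k else 0))
          + ∑ t ∈ s.powerset, (if Even t.card then ∏ k ∈ t, x k else 0) := by
      rw [aux_prod_one_add, ← Finset.sum_add_distrib]
      refine Finset.sum_congr rfl fun t _ => ?_
      rcases Nat.even_or_odd t.card with h | h
      · rw [if_pos h, if_neg (Nat.not_odd_iff_even.mpr h), zero_add]
      · rw [if_pos h, if_neg (Nat.not_even_iff_odd.mpr h), add_zero]
    rw [hodd, Finset.sum_powerset_insert ha, hE, ← hodd,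
      Finset.sum_insert ha, Finset.prod_insert ha]
    rw [hodd] at ih' ⊢
    set O := ∑ t ∈ s.powerset, (if Odd t.card then ∏ k ∈ t, x k else 0)
    set E := ∑ t ∈ s.powerset, (if Even t.card then ∏ k ∈ t, x k else 0)
    set S := ∑ j ∈ s, x j
    set P := ∏ j ∈ s, (1 + x j)
    linear_combination (1 + x a) * ih' + P * hxa + x a * hsplit + (x a * O) * hc

/-- for disjoint `I, J ⊆ [n]` with `J` nonempty and `|I| = n₁`, the
Boolean function `a ↦ (∏_{i ∈ I} a_i)(∑_{j ∈ J} a_j)` has Hamming weight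
`2^{n - n₁ - 1}`; moreover in `R_n`, the image of `X^I (∑_{j ∈ J} X_j) ∏_i (1 + X_i)`
equals the image of `X^I ∏_{k ∉ I ∪ J} (1 + X_k) ∑_{K ⊆ J, |K| odd} X^K`. -/
theorem monomial_times_linear {n : ℕ} (I J : Finset (Fin n))
    (hdisj : Disjoint I J) (hJ : J.Nonempty) (n₁ : ℕ) (hn₁ : I.card = n₁) :
    hammingWeight (fun a : Fin n → ZMod 2 => (∏ i ∈ I, a i) * (∑ j ∈ J, a j)) =
      2 ^ (n - n₁ - 1) ∧
    Ideal.Quotient.mk (sqIdeal n)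
        ((∏ i ∈ I, MvPolynomial.X i) * (∑ j ∈ J, MvPolynomial.X j) *
          ∏ i : Fin n, (1 + MvPolynomial.X i)) =
      Ideal.Quotient.mk (sqIdeal n)
        ((∏ i ∈ I, MvPolynomial.X i) *
          (∏ k ∈ (I ∪ J)ᶜ, (1 + MvPolynomial.X k)) *
          ∑ K ∈ J.powerset.filter (fun K => Odd K.card),
            ∏ k ∈ K, MvPolynomial.X k) := by
  classical
  constructor
  · -- counting part
    obtain ⟨j₀, hj₀⟩ := hJ
    have hj₀I : j₀ ∉ I := fun h => Finset.disjoint_left.mp hdisj h hj₀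
    have hmul : ∀ p q : ZMod 2, p * q = 1 ↔ p = 1 ∧ q = 1 := by decide
    have h2z : (2 : ZMod 2) = 0 := by decide
    have hne1 : ∀ p : ZMod 2, p ≠ 1 → p = 0 := by decide
    set C : Finset (Fin n) := (insert j₀ I)ᶜ with hCdef
    have herase : ∀ j ∈ J.erase j₀, j ∈ C := by
      intro j hj
      rw [hCdef, Finset.mem_compl, Finset.mem_insert]
      push_neg
      exact ⟨Finset.ne_of_mem_erase hj,
        fun h => Finset.disjoint_left.mp hdisj h (Finset.mem_of_mem_erase hj)⟩
    have hIC : ∀ i ∈ I, i ∉ C := by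
      intro i hi
      simp [hCdef, Finset.mem_insert, hi]
    have hj₀C : j₀ ∉ C := by simp [hCdef]
    have hcard : (Finset.univ.filter fun a : Fin n → ZMod 2 =>
          (∏ i ∈ I, a i) * (∑ j ∈ J, a j) = 1).card
        = (Finset.univ : Finset ({i // i ∈ C} → ZMod 2)).card := by
      refine Finset.card_nbij' (fun a (i : {i // i ∈ C}) => a i.1)
        (fun b i => if h : i ∈ C then b ⟨i, h⟩ else if i ∈ I then 1
          else 1 + ∑ j ∈ J.erase j₀, (if h' : j ∈ C then b ⟨j, h'⟩ else 0))
        (fun a _ => Finset.mem_univ _) ?_ ?_ ?_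
      · -- ext b lands in the filter
        intro b _
        simp only [Finset.mem_coe, Finset.mem_filter, Finset.mem_univ, true_and]
        have h1 : ∀ i ∈ I, (if h : i ∈ C then b ⟨i, h⟩ else if i ∈ I then 1
            else 1 + ∑ j ∈ J.erase j₀, (if h' : j ∈ C then b ⟨j, h'⟩ else 0)) = 1 := by
          intro i hi
          rw [dif_neg (hIC i hi), if_pos hi]
        rw [Finset.prod_congr rfl h1, Finset.prod_const_one, one_mul,
          ← Finset.sum_erase_add J _ hj₀]
        have h2 : ∀ j ∈ J.erase j₀, (if h : j ∈ C then b ⟨j, h⟩ else if j ∈ I then 1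
            else 1 + ∑ j ∈ J.erase j₀, (if h' : j ∈ C then b ⟨j, h'⟩ else 0))
            = (if h' : j ∈ C then b ⟨j, h'⟩ else 0) := by
          intro j hj
          rw [dif_pos (herase j hj), dif_pos (herase j hj)]
        rw [Finset.sum_congr rfl h2, dif_neg hj₀C, if_neg hj₀I]
        set s := ∑ j ∈ J.erase j₀, (if h' : j ∈ C then b ⟨j, h'⟩ else 0) with hs
        linear_combination s * h2z
      · -- left inverse
        intro a ha
        simp only [Finset.mem_coe, Finset.mem_filter, Finset.mem_univ, true_and] at ha
        obtain ⟨hp, hq⟩ := (hmul _ _).mp ha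
        have haI : ∀ i ∈ I, a i = 1 := by
          intro i hi
          by_contra hne
          rw [Finset.prod_eq_zero hi (hne1 _ hne)] at hp
          exact one_ne_zero hp.symm
        funext i
        beta_reduce
        by_cases hiC : i ∈ C
        · rw [dif_pos hiC]
        · by_cases hiI : i ∈ I
          · rw [dif_neg hiC, if_pos hiI, (haI i hiI)]
          · have hij : i = j₀ := by
              have hmem : i ∈ insert j₀ I := by
                by_contra hmem
                exact hiC (Finset.mem_compl.mpr hmem)
              rcases Finset.mem_insert.mp hmem with h | h
              · exact h
              · exact absurd h hiI
            subst hij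
            rw [dif_neg hiC, if_neg hiI]
            have hs : ∑ j ∈ J.erase i, (if h' : j ∈ C then a j else 0)
                = ∑ j ∈ J.erase i, a j :=
              Finset.sum_congr rfl fun j hj => dif_pos (herase j hj)
            rw [hs]
            rw [← Finset.sum_erase_add J _ hj₀] at hq
            linear_combination -hq + (∑ j ∈ J.erase i, a j) * h2z
      · -- right inverse
        intro b _
        funext i
        beta_reduce
        rw [dif_pos i.2]
    rw [hammingWeight, hcard, Finset.card_univ, Fintype.card_fun, ZMod.card,
      Fintype.card_coe, hCdef, Finset.card_compl,
      Finset.card_insert_of_notMem hj₀I, hn₁, Fintype.card_fin, Nat.sub_sub]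
  · -- ring part
    set Q := Ideal.Quotient.mk (sqIdeal n) with hQ
    have hc : (2 : MvPolynomial (Fin n) (ZMod 2) ⧸ sqIdeal n) = 0 := by
      have h2p : (2 : MvPolynomial (Fin n) (ZMod 2)) = 0 := by
        exact_mod_cast CharP.cast_eq_zero (MvPolynomial (Fin n) (ZMod 2)) 2
      calc (2 : MvPolynomial (Fin n) (ZMod 2) ⧸ sqIdeal n)
          = Q (2 : MvPolynomial (Fin n) (ZMod 2)) := (map_ofNat Q 2).symm
        _ = 0 := by rw [h2p, map_zero]
    have hx : ∀ j : Fin n, Q (MvPolynomial.X j) * Q (MvPolynomial.X j) = 0 := by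
      intro j
      rw [← map_mul, ← sq]
      exact Ideal.Quotient.eq_zero_iff_mem.mpr (Ideal.subset_span ⟨j, rfl⟩)
    simp only [map_mul, map_prod, map_sum, map_add, map_one]
    have hU : ∏ i : Fin n, (1 + Q (MvPolynomial.X i))
        = (∏ i ∈ I, (1 + Q (MvPolynomial.X i))) * (∏ i ∈ J, (1 + Q (MvPolynomial.X i)))
          * ∏ i ∈ (I ∪ J)ᶜ, (1 + Q (MvPolynomial.X i)) := by
      rw [← Finset.prod_mul_prod_compl (I ∪ J) (fun i => 1 + Q (MvPolynomial.X i)),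
        Finset.prod_union hdisj]
    have hA : (∏ i ∈ I, Q (MvPolynomial.X i)) * ∏ i ∈ I, (1 + Q (MvPolynomial.X i))
        = ∏ i ∈ I, Q (MvPolynomial.X i) := by
      rw [← Finset.prod_mul_distrib]
      exact Finset.prod_congr rfl fun i _ => by
        rw [mul_add, mul_one, hx i, add_zero]
    have hK := aux_key hc (fun i => Q (MvPolynomial.X i)) J (fun j _ => hx j)
    linear_combination
      ((∑ j ∈ J, Q (MvPolynomial.X j)) * (∏ i ∈ J, (1 + Q (MvPolynomial.X i)))
        * (∏ i ∈ (I ∪ J)ᶜ, (1 + Q (MvPolynomial.X i)))) * hA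
      + ((∏ i ∈ I, Q (MvPolynomial.X i))
        * (∏ i ∈ (I ∪ J)ᶜ, (1 + Q (MvPolynomial.X i)))) * hK
      + ((∏ i ∈ I, Q (MvPolynomial.X i)) * ∑ j ∈ J, Q (MvPolynomial.X j)) * hU
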